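/- The function g(y) = 1/(y tanh(y)) - 1/sinh²(y) is decreasing on (0, ∞). -/

import Mathlib

/-- `g(y) = 1/(y tanh y) - 1/sinh² y`. -/
noncomputable def gfun (y : ℝ) : ℝ :=
  1 / (y * Real.tanh y) - 1 / Real.sinh y ^ 2

open Real Set

/-- Helper: a function vanishing at `0` with nonnegative derivative on `[0,∞)` is
nonnegative there. -/
lemma nonneg_of_deriv_nonneg (f f' : ℝ → ℝ) (h0 : f 0 = 0)
    (hd : ∀ y, HasDerivAt f (f' y) y) (hp : ∀ y, 0 ≤ y → 0 ≤ f' y) :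
    ∀ y, 0 ≤ y → 0 ≤ f y := by
  intro y hy
  have hmono : MonotoneOn f (Ici (0:ℝ)) := by
    apply monotoneOn_of_deriv_nonneg (convex_Ici 0)
    · exact fun x _ => (hd x).continuousAt.continuousWithinAt
    · intro x hx
      exact ((hd x).differentiableAt).differentiableWithinAt
    · intro x hx
      rw [(hd x).deriv]
      exact hp x (le_of_lt (by simpa using hx))
  have := hmono (self_mem_Ici) (mem_Ici.2 hy) hy
  simpa [h0] using this

lemma sinh_le_mul_cosh (y : ℝ) (hy : 0 ≤ y) : Real.sinh y ≤ y * Real.cosh y := by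
  have := nonneg_of_deriv_nonneg (fun y => y * Real.cosh y - Real.sinh y)
    (fun y => y * Real.sinh y) (by simp)
    (fun y => by
      have h1 : HasDerivAt (fun y : ℝ => y * Real.cosh y)
          (1 * Real.cosh y + y * Real.sinh y) y :=
        (hasDerivAt_id y).mul (Real.hasDerivAt_cosh y)
      have h2 := h1.sub (Real.hasDerivAt_sinh y)
      exact h2.congr_deriv (by ring))
    (fun y hy => mul_nonneg hy (Real.sinh_nonneg_iff.2 hy)) y hy
  beta_reduce at this
  linarith

lemma cosh_ge (y : ℝ) (hy : 0 ≤ y) : 1 + y ^ 2 / 2 ≤ Real.cosh y := by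
  have := nonneg_of_deriv_nonneg (fun y => Real.cosh y - 1 - y ^ 2 / 2)
    (fun y => Real.sinh y - y) (by simp)
    (fun y => by
      have h1 := (Real.hasDerivAt_cosh y).sub (hasDerivAt_const y (1:ℝ))
      have h2 : HasDerivAt (fun y : ℝ => y ^ 2 / 2) (2 * y ^ 1 * 1 / 2) y :=
        ((hasDerivAt_id y).pow 2).div_const 2
      have := h1.sub h2
      exact this.congr_deriv (by ring))
    (fun y hy => by
      show (0:ℝ) ≤ Real.sinh y - y
      have := Real.self_le_sinh_iff.2 hy; linarith) y hy
  beta_reduce at this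
  linarith

lemma sinh_ge_cubic (y : ℝ) (hy : 0 ≤ y) : y + y ^ 3 / 6 ≤ Real.sinh y := by
  have := nonneg_of_deriv_nonneg (fun y => Real.sinh y - y - y ^ 3 / 6)
    (fun y => Real.cosh y - 1 - y ^ 2 / 2) (by simp)
    (fun y => by
      have h1 := (Real.hasDerivAt_sinh y).sub (hasDerivAt_id y)
      have h2 : HasDerivAt (fun y : ℝ => y ^ 3 / 6) (3 * y ^ 2 * 1 / 6) y :=
        ((hasDerivAt_id y).pow 3).div_const 6
      have := h1.sub h2
      exact this.congr_deriv (by ring))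
    (fun y hy => by
      show (0:ℝ) ≤ Real.cosh y - 1 - y ^ 2 / 2
      have := cosh_ge y hy; linarith) y hy
  beta_reduce at this
  linarith

lemma sinh_ge_mul_cosh (y : ℝ) (hy : 0 ≤ y) :
    (y - y ^ 3 / 3) * Real.cosh y ≤ Real.sinh y := by
  have := nonneg_of_deriv_nonneg
    (fun y => Real.sinh y - (y - y ^ 3 / 3) * Real.cosh y)
    (fun y => y ^ 2 * Real.cosh y - (y - y ^ 3 / 3) * Real.sinh y) (by simp)
    (fun y => by
      have h1 : HasDerivAt (fun y : ℝ => y - y ^ 3 / 3) (1 - 3 * y ^ 2 * 1 / 3) y :=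
        (hasDerivAt_id y).sub (((hasDerivAt_id y).pow 3).div_const 3)
      have h2 := h1.mul (Real.hasDerivAt_cosh y)
      have := (Real.hasDerivAt_sinh y).sub h2
      exact this.congr_deriv (by ring))
    (fun y hy => by
      show (0:ℝ) ≤ y ^ 2 * Real.cosh y - (y - y ^ 3 / 3) * Real.sinh y
      have h1 := sinh_le_mul_cosh y hy
      have h2 := Real.sinh_nonneg_iff.2 hy
      have h3 := mul_le_mul_of_nonneg_left h1 hy
      have h4 := mul_nonneg (mul_nonneg (mul_nonneg hy hy) hy) h2
      nlinarith [h3, h4]) y hy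
  beta_reduce at this
  linarith

/-- Key inequality: `2y² cosh y ≤ sinh²y cosh y + y sinh y` for `y ≥ 0`. -/
lemma key_ineq (y : ℝ) (hy : 0 ≤ y) :
    2 * y ^ 2 * Real.cosh y ≤ Real.sinh y ^ 2 * Real.cosh y + y * Real.sinh y := by
  have h1 := sinh_ge_cubic y hy
  have h2 := sinh_ge_mul_cosh y hy
  have hc : (0:ℝ) < Real.cosh y := Real.cosh_pos y
  have hs : 0 ≤ Real.sinh y := Real.sinh_nonneg_iff.2 hy
  have hsq : (y + y ^ 3 / 6) ^ 2 ≤ Real.sinh y ^ 2 := by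
    have := pow_le_pow_left₀ (by positivity) h1 2
    simpa using this
  have hA : (y + y ^ 3 / 6) ^ 2 * Real.cosh y ≤ Real.sinh y ^ 2 * Real.cosh y :=
    mul_le_mul_of_nonneg_right hsq hc.le
  have hB : y * ((y - y ^ 3 / 3) * Real.cosh y) ≤ y * Real.sinh y :=
    mul_le_mul_of_nonneg_left h2 hy
  nlinarith [pow_nonneg hy 6]

/-- The function `g` is decreasing on `(0, ∞)`. -/
theorem gfun_antitone : AntitoneOn gfun (Set.Ioi (0 : ℝ)) := by
  set h : ℝ → ℝ := fun y =>
    (Real.sinh y * Real.cosh y - y) / (y * Real.sinh y ^ 2) with hh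
  have heqon : ∀ y ∈ Set.Ioi (0:ℝ), gfun y = h y := by
    intro y hy
    have hy0 : (0:ℝ) < y := hy
    have hs : (0:ℝ) < Real.sinh y := Real.sinh_pos_iff.2 hy0
    have hc : (0:ℝ) < Real.cosh y := Real.cosh_pos y
    simp only [gfun, hh, Real.tanh_eq_sinh_div_cosh]
    field_simp
  -- derivative of h at points y > 0
  have hderiv : ∀ y ∈ Set.Ioi (0:ℝ), HasDerivAt h
      (((Real.cosh y * Real.cosh y + Real.sinh y * Real.sinh y - 1) * (y * Real.sinh y ^ 2)
        - (Real.sinh y * Real.cosh y - y) * (1 * Real.sinh y ^ 2 + y * (2 * Real.sinh y ^ 1 * Real.cosh y)))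
        / (y * Real.sinh y ^ 2) ^ 2) y := by
    intro y hy
    have hy0 : (0:ℝ) < y := hy
    have hs : (0:ℝ) < Real.sinh y := Real.sinh_pos_iff.2 hy0
    have hN : HasDerivAt (fun y => Real.sinh y * Real.cosh y - y)
        (Real.cosh y * Real.cosh y + Real.sinh y * Real.sinh y - 1) y := by
      exact ((Real.hasDerivAt_sinh y).mul (Real.hasDerivAt_cosh y)).sub (hasDerivAt_id y)
    have hD : HasDerivAt (fun y => y * Real.sinh y ^ 2)
        (1 * Real.sinh y ^ 2 + y * (2 * Real.sinh y ^ 1 * Real.cosh y)) y :=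
      (hasDerivAt_id y).mul ((Real.hasDerivAt_sinh y).pow 2)
    exact hN.div hD (by positivity)
  apply antitoneOn_of_deriv_nonpos (convex_Ioi 0)
  · intro y hy
    have hgh : HasDerivAt gfun _ y :=
      (hderiv y hy).congr_of_eventuallyEq
        ((isOpen_Ioi.eventually_mem hy).mono (fun x hx => heqon x hx))
    exact hgh.continuousAt.continuousWithinAt
  · rw [interior_Ioi]
    intro y hy
    have hgh : HasDerivAt gfun _ y :=
      (hderiv y hy).congr_of_eventuallyEq
        ((isOpen_Ioi.eventually_mem hy).mono (fun x hx => heqon x hx))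
    exact hgh.differentiableAt.differentiableWithinAt
  · rw [interior_Ioi]
    intro y hy
    have hgh : HasDerivAt gfun _ y :=
      (hderiv y hy).congr_of_eventuallyEq
        ((isOpen_Ioi.eventually_mem hy).mono (fun x hx => heqon x hx))
    rw [hgh.deriv]
    have hy0 : (0:ℝ) < y := hy
    have hs : (0:ℝ) < Real.sinh y := Real.sinh_pos_iff.2 hy0
    have hc : (0:ℝ) < Real.cosh y := Real.cosh_pos y
    have hT := key_ineq y hy0.le
    have hcs : Real.cosh y ^ 2 = 1 + Real.sinh y ^ 2 := by
      have := Real.cosh_sq_sub_sinh_sq y; nlinarith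
    apply div_nonpos_of_nonpos_of_nonneg _ (by positivity)
    have h5 : Real.sinh y * (2 * y ^ 2 * Real.cosh y) ≤
        Real.sinh y * (Real.sinh y ^ 2 * Real.cosh y + y * Real.sinh y) :=
      mul_le_mul_of_nonneg_left hT hs.le
    have hnum : (Real.cosh y * Real.cosh y + Real.sinh y * Real.sinh y - 1) * (y * Real.sinh y ^ 2)
        - (Real.sinh y * Real.cosh y - y) * (1 * Real.sinh y ^ 2 + y * (2 * Real.sinh y ^ 1 * Real.cosh y))
        = Real.sinh y * (2 * y ^ 2 * Real.cosh y)
          - Real.sinh y * (Real.sinh y ^ 2 * Real.cosh y + y * Real.sinh y) := by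
      linear_combination (-(y * Real.sinh y ^ 2)) * hcs
    linarith [h5, hnum]
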